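/- With A_mat as the 2×2 matrix cI₂ + d·vvᵀ where c = 2A²NP₁/(σ²(A²|a|+1)), d = A⁴N/(|a|²(A²|a|+1)²), v = (Re(a), Im(a))ᵀ, |v|² = |a|², the sum of the first two diagonal entries of A_mat⁻¹ equals (4σ²P₁(A²|a|+1)² + σ⁴A²(A²|a|+1)) / (4NA²P₁²(A²|a|+1) + 2Nσ²A⁴P₁). -/

import Mathlib

open Matrix

theorem stmt10 (a : ℂ) (ha : a ≠ 0) (A P₁ σ2 : ℝ)
    (hA : 0 < A) (hP₁ : 0 < P₁) (hσ : 0 < σ2) (N : ℕ) (hN : 1 ≤ N)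
    (c d : ℝ) (v : Fin 2 → ℝ)
    (hc : c = 2 * A ^ 2 * N * P₁ / (σ2 * (A ^ 2 * ‖a‖ + 1)))
    (hd : d = A ^ 4 * N / (‖a‖ ^ 2 * (A ^ 2 * ‖a‖ + 1) ^ 2))
    (hv : v = ![a.re, a.im])
    (Amat : Matrix (Fin 2) (Fin 2) ℝ)
    (hAmat : Amat = c • (1 : Matrix (Fin 2) (Fin 2) ℝ)
        + d • (Matrix.of fun i j => v i * v j)) :
    Amat⁻¹ 0 0 + Amat⁻¹ 1 1 =
      (4 * σ2 * P₁ * (A ^ 2 * ‖a‖ + 1) ^ 2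
          + σ2 ^ 2 * A ^ 2 * (A ^ 2 * ‖a‖ + 1)) /
        (4 * N * A ^ 2 * P₁ ^ 2 * (A ^ 2 * ‖a‖ + 1)
          + 2 * N * σ2 * A ^ 4 * P₁) := by
  set r := ‖a‖ with hrdef
  have hr0 : 0 < r := norm_pos_iff.mpr ha
  have hN0 : (0:ℝ) < N := by exact_mod_cast hN
  have hden : 0 < A ^ 2 * r + 1 := by positivity
  have hc0 : 0 < c := by
    rw [hc]
    exact div_pos (by positivity) (mul_pos hσ hden)
  have hd0 : 0 < d := by
    rw [hd]
    exact div_pos (by positivity) (mul_pos (pow_pos hr0 2) (pow_pos hden 2))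
  have hre : a.re ^ 2 + a.im ^ 2 = r ^ 2 := by
    rw [hrdef, Complex.sq_norm, Complex.normSq_apply]; ring
  have him : a.im ^ 2 = r ^ 2 - a.re ^ 2 := by linarith
  have h00 : Amat 0 0 = c + d * a.re ^ 2 := by
    subst hAmat hv; simp [Matrix.add_apply, Matrix.one_apply]; try (left; ring)
  have h01 : Amat 0 1 = d * (a.re * a.im) := by
    subst hAmat hv; simp [Matrix.add_apply, Matrix.one_apply]; try (left; ring)
  have h10 : Amat 1 0 = d * (a.im * a.re) := by
    subst hAmat hv; simp [Matrix.add_apply, Matrix.one_apply]; try (left; ring)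
  have h11 : Amat 1 1 = c + d * a.im ^ 2 := by
    subst hAmat hv; simp [Matrix.add_apply, Matrix.one_apply]; try (left; ring)
  have hdet : Amat.det = c ^ 2 + c * d * r ^ 2 := by
    rw [Matrix.det_fin_two, h00, h01, h10, h11]; linear_combination c * d * hre
  have hdet0 : Amat.det ≠ 0 := by rw [hdet]; positivity
  have hsum : Amat⁻¹ 0 0 + Amat⁻¹ 1 1
      = (2 * c + d * r ^ 2) / (c ^ 2 + c * d * r ^ 2) := by
    rw [Matrix.inv_def, Matrix.adjugate_fin_two]
    simp [Ring.inverse_eq_inv', hdet, h00, h11]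
    rw [inv_mul_eq_div, inv_mul_eq_div, ← add_div]
    congr 1
    linear_combination d * hre
  rw [hsum, hc, hd]
  rw [div_eq_div_iff (by positivity) (by positivity)]
  field_simp
  ring
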